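/- For 1 < k < n−1, the degree in the variable x_1 of the polynomial P_fer(x) = Δ_K([α·x]_{α∈𝓘}) / Δ_n(x) equals C(n−1,k)·C(n−1,k−1) − n + 1, where K = C(n,k). -/

import Mathlib

open MvPolynomial
open scoped Classical
set_option maxRecDepth 1000
set_option maxHeartbeats 1000000


variable {N : ℕ}


noncomputable def F (A B : Finset (Fin N)) : MvPolynomial (Fin N) ℚ :=
  (∑ i ∈ A, X i) - ∑ i ∈ B, X i

lemma coeff_sumX (A : Finset (Fin N)) (j : Fin N) :
    coeff (Finsupp.single j 1) (∑ i ∈ A, (X i : MvPolynomial (Fin N) ℚ)) =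
      if j ∈ A then 1 else 0 := by
  rw [coeff_sum]
  simp only [coeff_X']
  have : ∀ x : Fin N, ((Finsupp.single x (1:ℕ) = Finsupp.single j 1) ↔ x = j) :=
    fun x => Finsupp.single_left_inj one_ne_zero
  simp only [this]
  rw [Finset.sum_ite_eq' A j (fun _ => (1:ℚ))]

lemma coeff_F (A B : Finset (Fin N)) (j : Fin N) :
    coeff (Finsupp.single j 1) (F A B) =
      (if j ∈ A then 1 else 0) - (if j ∈ B then 1 else 0) := by
  simp [F, coeff_sumX]

lemma F_ne_zero {A B : Finset (Fin N)} (h : A ≠ B) : F A B ≠ 0 := by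
  obtain ⟨j, hj⟩ : ∃ j, ¬(j ∈ A ↔ j ∈ B) := by
    by_contra hc
    push_neg at hc
    exact h (Finset.ext fun j => hc j)
  intro h0
  have := coeff_F A B j
  rw [h0, coeff_zero] at this
  by_cases h1 : j ∈ A <;> by_cases h2 : j ∈ B <;> simp [h1, h2] at this hj

lemma degF_le (A B : Finset (Fin N)) (v : Fin N) : degreeOf v (F A B) ≤ 1 := by
  refine (degreeOf_sub_le v _ _).trans ?_
  have h : ∀ C : Finset (Fin N), degreeOf v (∑ i ∈ C, (X i : MvPolynomial (Fin N) ℚ)) ≤ 1 := by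
    intro C
    refine (degreeOf_sum_le v C _).trans ?_
    refine Finset.sup_le fun i _ => ?_
    rw [degreeOf_X]
    split <;> simp
  simp [h]

lemma degF_zero {A B : Finset (Fin N)} {v : Fin N} (hv : (v ∈ A) ↔ (v ∈ B)) :
    degreeOf v (F A B) = 0 := by
  have hF : F A B = F (A \ B) (B \ A) := by
    unfold F
    have hA := Finset.sum_inter_add_sum_sdiff A B (fun i => (X i : MvPolynomial (Fin N) ℚ))
    have hB := Finset.sum_inter_add_sum_sdiff B A (fun i => (X i : MvPolynomial (Fin N) ℚ))
    rw [← hA, ← hB, Finset.inter_comm]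
    ring
  rw [hF]
  have h : ∀ C : Finset (Fin N), v ∉ C →
      degreeOf v (∑ i ∈ C, (X i : MvPolynomial (Fin N) ℚ)) = 0 := by
    intro C hC
    refine Nat.le_zero.mp ?_
    refine (degreeOf_sum_le v C _).trans ?_
    refine Finset.sup_le fun i hi => ?_
    have : v ≠ i := fun h => hC (h ▸ hi)
    rw [degreeOf_X, if_neg this]
  have h1 := h (A \ B) (by simp [hv.mp]; tauto)
  have h2 := h (B \ A) (by simp [hv.mpr]; tauto)
  refine Nat.le_zero.mp ?_
  refine (degreeOf_sub_le v _ _).trans ?_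
  simp [h1, h2]

lemma degF_one {A B : Finset (Fin N)} {v : Fin N} (hv : ¬((v ∈ A) ↔ (v ∈ B))) :
    degreeOf v (F A B) = 1 := by
  refine le_antisymm (degF_le A B v) ?_
  have hc : coeff (Finsupp.single v 1) (F A B) ≠ 0 := by
    rw [coeff_F]
    by_cases h1 : v ∈ A <;> by_cases h2 : v ∈ B <;> simp [h1, h2] at hv ⊢
  have hmem : Finsupp.single v 1 ∈ (F A B).support := mem_support_iff.mpr hc
  have := Finset.le_sup (f := fun m : Fin N →₀ ℕ => m v) hmem
  rw [degreeOf_eq_sup]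
  simpa using this


lemma deg0_mul {m : ℕ} (p q : MvPolynomial (Fin (m+1)) ℚ) (hp : p ≠ 0) (hq : q ≠ 0) :
    degreeOf 0 (p*q) = degreeOf 0 p + degreeOf 0 q := by
  rw [← natDegree_finSuccEquiv, ← natDegree_finSuccEquiv, ← natDegree_finSuccEquiv, map_mul]
  exact Polynomial.natDegree_mul (by simpa using hp) (by simpa using hq)

lemma deg0_prod {m : ℕ} {ι : Type*} (s : Finset ι) (f : ι → MvPolynomial (Fin (m+1)) ℚ)
    (h : ∀ i ∈ s, f i ≠ 0) :
    degreeOf 0 (∏ i ∈ s, f i) = ∑ i ∈ s, degreeOf 0 (f i) := by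
  induction s using Finset.cons_induction with
  | empty => simpa using degreeOf_C (1:ℚ) (0 : Fin (m+1))
  | cons a s ha ih =>
    rw [Finset.prod_cons, Finset.sum_cons,
      deg0_mul _ _ (h a (Finset.mem_cons_self a s)) (Finset.prod_ne_zero_iff.mpr
        (fun i hi => h i (Finset.mem_cons_of_mem hi))),
      ih (fun i hi => h i (Finset.mem_cons_of_mem hi))]


/-- For `1 < k < n−1`, the fermionic polynomial
`P_fer(x) = Δ_K([α·x]_{α∈𝓘}) / Δ_n(x)` (where `𝓘` is the set of 0-1 multi-indices with
exactly `k` ones, ordered lexicographically, and `K = C(n,k)`) is a polynomial — i.e.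
`Δ_n` divides the numerator — and its degree in `x_1` equals
`C(n−1,k)·C(n−1,k−1) − n + 1`. Subsets of `Fin n` of cardinality `k` encode the
multi-indices via their indicator vectors. -/
theorem fermionic_polynomial_degree (n k : ℕ) (hn : 0 < n) (hk : 1 < k) (hkn : k < n - 1) :
    ∃ Q : MvPolynomial (Fin n) ℚ,
      (∏ p ∈ Finset.univ.filter
          (fun p : Finset (Fin n) × Finset (Fin n) =>
            p.1.card = k ∧ p.2.card = k ∧
              toLex (fun i => if i ∈ p.1 then (1 : ℕ) else 0) <
                toLex (fun i => if i ∈ p.2 then (1 : ℕ) else 0)),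
          ((∑ i ∈ p.1, (X i : MvPolynomial (Fin n) ℚ)) - ∑ i ∈ p.2, X i))
        = (∏ q ∈ Finset.univ.filter (fun q : Fin n × Fin n => q.1 < q.2),
            ((X q.1 : MvPolynomial (Fin n) ℚ) - X q.2)) * Q ∧
      (Q.degreeOf (⟨0, hn⟩ : Fin n) : ℤ) =
        (Nat.choose (n - 1) k : ℤ) * (Nat.choose (n - 1) (k - 1)) - n + 1 := by
  obtain ⟨m, rfl⟩ : ∃ m, n = m + 1 := ⟨n - 1, (Nat.succ_pred_eq_of_pos hn).symm⟩
  have hkm : k < m := by omega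
  have hv0 : (⟨0, hn⟩ : Fin (m+1)) = 0 := rfl
  set N := m + 1 with hN
  -- the index sets
  set S : Finset (Finset (Fin N) × Finset (Fin N)) := Finset.univ.filter
      (fun p => p.1.card = k ∧ p.2.card = k ∧
        toLex (fun i => if i ∈ p.1 then (1 : ℕ) else 0) <
          toLex (fun i => if i ∈ p.2 then (1 : ℕ) else 0)) with hS
  set P : Finset (Fin N × Fin N) := Finset.univ.filter (fun q => q.1 < q.2) with hP
  -- auxiliary subsets W q
  have hWex : ∀ q : Fin N × Fin N, ∃ W : Finset (Fin N),
      W ⊆ (Finset.univ \ {0, q.1, q.2}) ∧ W.card = k - 1 := by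
    intro q
    apply Finset.exists_subset_card_eq
    have h3 : ({0, q.1, q.2} : Finset (Fin N)).card ≤ 3 := by
      refine (Finset.card_insert_le _ _).trans ?_
      have := (Finset.card_insert_le q.1 ({q.2} : Finset (Fin N)))
      simp at this ⊢
      omega
    have := Finset.card_sdiff_of_subset (Finset.subset_univ ({0, q.1, q.2} : Finset (Fin N)))
    rw [this, Finset.card_univ, Fintype.card_fin]
    omega
  choose W hWsub hWcard using hWex
  have hW0 : ∀ q, (0 : Fin N) ∉ W q := fun q h => by
    have := hWsub q h; simp at this
  have hW1 : ∀ q, q.1 ∉ W q := fun q h => by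
    have := hWsub q h; simp at this
  have hW2 : ∀ q, q.2 ∉ W q := fun q h => by
    have := hWsub q h; simp at this
  -- the embedding f
  set f : Fin N × Fin N → Finset (Fin N) × Finset (Fin N) :=
    fun q => (insert q.2 (W q), insert q.1 (W q)) with hf
  set T : Finset (Finset (Fin N) × Finset (Fin N)) := P.image f with hT
  -- basic facts about elements of P
  have hq2ne : ∀ q ∈ P, q.2 ≠ (0 : Fin N) := by
    intro q hq
    rw [hP, Finset.mem_filter] at hq
    exact (lt_of_le_of_lt (Fin.zero_le _) hq.2).ne'
  have hqne : ∀ q ∈ P, q.1 ≠ q.2 := by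
    intro q hq; rw [hP, Finset.mem_filter] at hq; exact hq.2.ne
  -- cards of f q components
  have hcard1 : ∀ q ∈ P, (insert q.2 (W q)).card = k := by
    intro q hq
    rw [Finset.card_insert_of_notMem (hW2 q), hWcard]; omega
  have hcard2 : ∀ q ∈ P, (insert q.1 (W q)).card = k := by
    intro q hq
    rw [Finset.card_insert_of_notMem (hW1 q), hWcard]; omega
  -- lex comparison for f q
  have hlex : ∀ q ∈ P,
      toLex (fun i => if i ∈ (f q).1 then (1:ℕ) else 0) <
        toLex (fun i => if i ∈ (f q).2 then (1:ℕ) else 0) := by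
    intro q hq
    rw [hP, Finset.mem_filter] at hq
    refine ⟨q.1, ?_, ?_⟩
    · intro j hj
      have hj1 : j ≠ q.1 := hj.ne
      have hj2 : j ≠ q.2 := (hj.trans hq.2).ne
      simp only [hf, Finset.mem_insert]
      simp [hj1, hj2]
    · simp only [hf, Finset.mem_insert]
      have h1 : ¬(q.1 = q.2 ∨ q.1 ∈ W q) := by
        rintro (h | h); exact hq.2.ne h; exact hW1 q h
      simp [h1]
  have hTS : T ⊆ S := by
    intro p hp
    rw [hT, Finset.mem_image] at hp
    obtain ⟨q, hq, rfl⟩ := hp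
    rw [hS, Finset.mem_filter]
    exact ⟨Finset.mem_univ _, hcard1 q hq, hcard2 q hq, hlex q hq⟩
  -- injectivity of f on P
  have hsd : ∀ q ∈ P, (f q).2 \ (f q).1 = {q.1} := by
    intro q hq
    ext a
    simp only [hf, Finset.mem_sdiff, Finset.mem_insert, Finset.mem_singleton]
    constructor
    · rintro ⟨h1 | h1, h2⟩
      · exact h1
      · exact absurd (Or.inr h1) h2
    · rintro rfl
      refine ⟨Or.inl rfl, ?_⟩
      rintro (h | h); exact hqne q hq h; exact hW1 q h
  have hsd' : ∀ q ∈ P, (f q).1 \ (f q).2 = {q.2} := by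
    intro q hq
    ext a
    simp only [hf, Finset.mem_sdiff, Finset.mem_insert, Finset.mem_singleton]
    constructor
    · rintro ⟨h1 | h1, h2⟩
      · exact h1
      · exact absurd (Or.inr h1) h2
    · rintro rfl
      refine ⟨Or.inl rfl, ?_⟩
      rintro (h | h); exact hqne q hq h.symm; exact hW2 q h
  have hfinj : Set.InjOn f P := by
    intro q hq q' hq' he
    have h1 : ({q.1} : Finset (Fin N)) = {q'.1} := by
      rw [← hsd q hq, ← hsd q' hq', he]
    have h2 : ({q.2} : Finset (Fin N)) = {q'.2} := by
      rw [← hsd' q hq, ← hsd' q' hq', he]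
    rw [Finset.singleton_inj] at h1 h2
    exact Prod.ext h1 h2
  -- nonzero-ness of the factors
  have hne0 : ∀ p ∈ S, F p.1 p.2 ≠ (0 : MvPolynomial (Fin N) ℚ) := by
    intro p hp
    rw [hS, Finset.mem_filter] at hp
    refine F_ne_zero (fun he => ?_)
    have := hp.2.2.2
    rw [he] at this
    exact lt_irrefl _ this
  -- product over T
  have hprod_T : ∏ p ∈ T, F p.1 p.2
      = (-1 : MvPolynomial (Fin N) ℚ)^P.card *
        ∏ q ∈ P, ((X q.1 : MvPolynomial (Fin N) ℚ) - X q.2) := by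
    rw [hT, Finset.prod_image (fun a ha b hb => hfinj ha hb)]
    have hc : ∀ q ∈ P, F (f q).1 (f q).2
        = -((X q.1 : MvPolynomial (Fin N) ℚ) - X q.2) := by
      intro q hq
      show (∑ i ∈ insert q.2 (W q), X i) - (∑ i ∈ insert q.1 (W q), X i) = _
      rw [Finset.sum_insert (hW2 q), Finset.sum_insert (hW1 q)]
      ring
    rw [Finset.prod_congr rfl hc]
    have h2 : ∀ q ∈ P, -((X q.1 : MvPolynomial (Fin N) ℚ) - X q.2)
        = (-1) * ((X q.1 : MvPolynomial (Fin N) ℚ) - X q.2) := fun q _ => (neg_one_mul _).symm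
    rw [Finset.prod_congr rfl h2, Finset.prod_mul_distrib, Finset.prod_const]
  -- the quotient polynomial
  refine ⟨(-1 : MvPolynomial (Fin N) ℚ)^P.card * ∏ p ∈ S \ T, F p.1 p.2, ?_, ?_⟩
  · show ∏ p ∈ S, F p.1 p.2 = _
    rw [← Finset.prod_sdiff hTS, hprod_T]
    ring
  · rw [hv0]
    -- remove the sign
    have hsign : degreeOf (0 : Fin N)
        ((-1 : MvPolynomial (Fin N) ℚ)^P.card * ∏ p ∈ S \ T, F p.1 p.2)
        = degreeOf 0 (∏ p ∈ S \ T, F p.1 p.2) := by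
      rcases Nat.even_or_odd P.card with h | h
      · rw [h.neg_one_pow, one_mul]
      · rw [h.neg_one_pow, neg_one_mul, degreeOf_neg]
    rw [hsign]
    have hdeg : degreeOf (0 : Fin N) (∏ p ∈ S \ T, F p.1 p.2)
        = ∑ p ∈ S \ T, degreeOf 0 (F p.1 p.2) :=
      deg0_prod _ _ (fun p hp => hne0 p (Finset.mem_sdiff.mp hp).1)
    rw [hdeg]
    set nc : Finset (Fin N) × Finset (Fin N) → Prop :=
      fun p => ¬((0 : Fin N) ∈ p.1 ↔ (0 : Fin N) ∈ p.2) with hnc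
    have hsum : ∑ p ∈ S \ T, degreeOf (0 : Fin N) (F p.1 p.2)
        = ((S \ T).filter nc).card := by
      rw [Finset.card_filter]
      refine Finset.sum_congr rfl (fun p _ => ?_)
      by_cases h : (0 : Fin N) ∈ p.1 ↔ (0 : Fin N) ∈ p.2
      · rw [degF_zero h, if_neg (by simp [hnc, h])]
      · rw [degF_one h, if_pos (by simp [hnc, h])]
    rw [hsum]
    -- count in S
    have hSfilter : S.filter nc
        = (Finset.univ.filter (fun B : Finset (Fin N) => B.card = k ∧ (0:Fin N) ∉ B)) ×ˢ
          (Finset.univ.filter (fun A : Finset (Fin N) => A.card = k ∧ (0:Fin N) ∈ A)) := by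
      ext p
      rw [Finset.mem_product, hS]
      simp only [Finset.mem_filter, Finset.mem_univ, true_and, hnc]
      constructor
      · rintro ⟨⟨hc1, hc2, hlt⟩, hn0⟩
        have hlt' : ∃ i : Fin N, (∀ j, j < i →
            (if j ∈ p.1 then (1:ℕ) else 0) = (if j ∈ p.2 then 1 else 0)) ∧
            (if i ∈ p.1 then (1:ℕ) else 0) < (if i ∈ p.2 then 1 else 0) := hlt
        obtain ⟨i, hji, hi⟩ := hlt'
        have hi0 : i = 0 := by
          by_contra hne
          have := hji 0 (Fin.pos_of_ne_zero hne)
          by_cases h1 : (0:Fin N) ∈ p.1 <;> by_cases h2 : (0:Fin N) ∈ p.2 <;>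
            simp [h1, h2] at this hn0
        subst hi0
        have hmem : (0:Fin N) ∉ p.1 ∧ (0:Fin N) ∈ p.2 := by
          by_cases h1 : (0:Fin N) ∈ p.1 <;> by_cases h2 : (0:Fin N) ∈ p.2 <;>
            simp [h1, h2] at hi ⊢
        exact ⟨⟨hc1, hmem.1⟩, hc2, hmem.2⟩
      · rintro ⟨⟨hc1, h1⟩, hc2, h2⟩
        refine ⟨⟨hc1, hc2, ?_⟩, by simp [h1, h2]⟩
        have : ∃ i : Fin N, (∀ j, j < i →
            (if j ∈ p.1 then (1:ℕ) else 0) = (if j ∈ p.2 then 1 else 0)) ∧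
            (if i ∈ p.1 then (1:ℕ) else 0) < (if i ∈ p.2 then 1 else 0) :=
          ⟨0, fun j hj => absurd hj j.zero_le.not_gt, by simp [h1, h2]⟩
        exact this
    have hcB : (Finset.univ.filter
        (fun B : Finset (Fin N) => B.card = k ∧ (0:Fin N) ∉ B)).card = Nat.choose m k := by
      have he : Finset.univ.filter (fun B : Finset (Fin N) => B.card = k ∧ (0:Fin N) ∉ B)
          = Finset.powersetCard k ({0}ᶜ : Finset (Fin N)) := by
        ext B
        rw [Finset.mem_powersetCard]
        simp only [Finset.mem_filter, Finset.mem_univ, true_and, Finset.subset_iff,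
          Finset.mem_compl, Finset.mem_singleton]
        constructor
        · rintro ⟨hc, h0⟩; exact ⟨fun a ha h => h0 (h ▸ ha), hc⟩
        · rintro ⟨hs, hc⟩; exact ⟨hc, fun h0 => hs h0 rfl⟩
      rw [he, Finset.card_powersetCard]
      congr 1
      simp [Finset.card_compl]; omega
    have hcA : (Finset.univ.filter
        (fun A : Finset (Fin N) => A.card = k ∧ (0:Fin N) ∈ A)).card
        = Nat.choose m (k-1) := by
      rw [show Nat.choose m (k-1) = (Finset.powersetCard (k-1) ({0}ᶜ : Finset (Fin N))).card by
        rw [Finset.card_powersetCard]; congr 1; simp [Finset.card_compl]; omega]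
      refine Finset.card_nbij' (fun A => A.erase 0) (fun B => insert 0 B) ?_ ?_ ?_ ?_
      · intro A hA
        simp only [Finset.mem_coe, Finset.mem_filter, Finset.mem_univ, true_and] at hA
        rw [Finset.mem_coe, Finset.mem_powersetCard]
        constructor
        · intro a ha
          simp only [Finset.mem_compl, Finset.mem_singleton]
          exact (Finset.mem_erase.mp ha).1
        · rw [Finset.card_erase_of_mem hA.2, hA.1]
      · intro B hB
        rw [Finset.mem_coe, Finset.mem_powersetCard] at hB
        have h0B : (0:Fin N) ∉ B := fun h => by simpa using hB.1 h
        simp only [Finset.mem_coe, Finset.mem_filter, Finset.mem_univ, true_and]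
        refine ⟨?_, Finset.mem_insert_self _ _⟩
        rw [Finset.card_insert_of_notMem h0B, hB.2]
        omega
      · intro A hA
        simp only [Finset.mem_coe, Finset.mem_filter, Finset.mem_univ, true_and] at hA
        exact Finset.insert_erase hA.2
      · intro B hB
        rw [Finset.mem_coe, Finset.mem_powersetCard] at hB
        exact Finset.erase_insert (fun h => by simpa using hB.1 h)
    -- count in T
    have h01 : ∀ q ∈ P, (0:Fin N) ∉ (f q).1 := by
      intro q hq h
      simp only [hf, Finset.mem_insert] at h
      rcases h with h | h
      · exact hq2ne q hq h.symm
      · exact hW0 q h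
    have h02 : ∀ q ∈ P, ((0:Fin N) ∈ (f q).2 ↔ q.1 = 0) := by
      intro q hq
      simp only [hf, Finset.mem_insert]
      constructor
      · rintro (h | h)
        · exact h.symm
        · exact absurd h (hW0 q)
      · intro h; exact Or.inl h.symm
    have hTfilter : T.filter nc = (P.filter (fun q => q.1 = 0)).image f := by
      ext p
      simp only [hT, Finset.mem_filter, Finset.mem_image, hnc]
      constructor
      · rintro ⟨⟨q, hq, rfl⟩, hn0⟩
        refine ⟨q, ⟨hq, ?_⟩, rfl⟩
        have ha := h01 q hq
        have hb := h02 q hq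
        tauto
      · rintro ⟨q, ⟨hq, hq0⟩, rfl⟩
        refine ⟨⟨q, hq, rfl⟩, ?_⟩
        have ha := h01 q hq
        have hb := (h02 q hq).mpr hq0
        tauto
    have hTc : (T.filter nc).card = m := by
      rw [hTfilter, Finset.card_image_of_injOn
        (hfinj.mono (fun q hq => (Finset.mem_filter.mp hq).1))]
      have he : P.filter (fun q => q.1 = 0)
          = ({(0:Fin N)} : Finset (Fin N)) ×ˢ
            (Finset.univ.filter (fun j : Fin N => (0:Fin N) < j)) := by
        ext q
        rw [Finset.mem_product, hP]
        simp only [Finset.mem_filter, Finset.mem_univ, true_and, Finset.mem_singleton]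
        constructor
        · rintro ⟨hlt, h0⟩; exact ⟨h0, h0 ▸ hlt⟩
        · rintro ⟨h0, hlt⟩; exact ⟨h0 ▸ hlt, h0⟩
      rw [he, Finset.card_product, Finset.card_singleton, one_mul]
      have : Finset.univ.filter (fun j : Fin N => (0:Fin N) < j)
          = Finset.univ.filter (fun j : Fin N => j ≠ 0) := by
        ext j
        simp [Fin.pos_iff_ne_zero]
      rw [this, Finset.filter_ne', Finset.card_erase_of_mem (Finset.mem_univ _)]
      simp
      omega
    -- assemble
    have hsub : T.filter nc ⊆ S.filter nc := Finset.filter_subset_filter _ hTS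
    have hSTf : (S \ T).filter nc = (S.filter nc) \ (T.filter nc) := by
      ext p
      simp only [Finset.mem_filter, Finset.mem_sdiff]
      tauto
    have hSc : (S.filter nc).card = Nat.choose m k * Nat.choose m (k-1) := by
      rw [hSfilter, Finset.card_product, hcB, hcA]
    have hle : m ≤ Nat.choose m k * Nat.choose m (k-1) := by
      have := Finset.card_le_card hsub
      rwa [hTc, hSc] at this
    rw [hSTf, Finset.card_sdiff_of_subset hsub, hSc, hTc]
    have hN1 : N - 1 = m := rfl
    rw [hN1]
    rw [Nat.cast_sub hle]
    push_cast
    ring
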